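/- Let G = A * B be a free product and let C, D, E ≤ G be special subgroups, i.e. C = ⟨C_A, C_B⟩, D = ⟨D_A, D_B⟩, E = ⟨E_A, E_B⟩ with C_A, D_A, E_A ≤ A and C_B, D_B, E_B ≤ B. If C_A D_A ∩ C_A E_A = C_A (D_A ∩ E_A) (as subsets of A) and C_B D_B ∩ C_B E_B = C_B (D_B ∩ E_B) (as subsets of B), then CD ∩ CE = C(D ∩ E) as subsets of G. -/

import Mathlib

open scoped Monoid.Coprod Pointwise

namespace StmtAux

open Monoid Monoid.CoprodI

variable {ι : Type*} {M : ι → Type*} [∀ i, Group (M i)]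

/-- The split predicate: the list decomposes as a `C`-prefix, a junction letter lying in
`C i * D i`, and a `D`-suffix. -/
def Split (C D : ∀ i, Subgroup (M i)) (l : List (Σ i, M i)) : Prop :=
  ∃ u v : List (Σ i, M i), l = u ++ v ∧ (∀ a ∈ u, a.2 ∈ C a.1) ∧
    (∀ a ∈ v.tail, a.2 ∈ D a.1) ∧
    ∀ h : v ≠ [], (v.head h).2 ∈
      (C (v.head h).1 : Set (M (v.head h).1)) * (D (v.head h).1 : Set (M (v.head h).1))

variable {C D E : ∀ i, Subgroup (M i)}

theorem split_of_allD {l : List (Σ i, M i)} (h : ∀ a ∈ l, a.2 ∈ D a.1) : Split C D l := by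
  refine ⟨[], l, rfl, by simp, fun a ha => h a (List.mem_of_mem_tail ha), fun hne => ?_⟩
  simpa using Set.mul_mem_mul (one_mem (C (l.head hne).1)) (h _ (List.head_mem hne))

theorem split_cons {l : List (Σ i, M i)} {i : ι} {m : M i} (hm : m ∈ C i) (h : Split C D l) :
    Split C D (⟨i, m⟩ :: l) := by
  obtain ⟨u, v, rfl, hu, ht, hh⟩ := h
  refine ⟨⟨i, m⟩ :: u, v, rfl, ?_, ht, hh⟩
  rintro a ha
  rcases List.mem_cons.1 ha with rfl | ha
  · exact hm
  · exact hu a ha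

theorem split_tail {t : List (Σ i, M i)} {i : ι} {x : M i}
    (h : Split C D (⟨i, x⟩ :: t)) : Split C D t := by
  obtain ⟨u, v, he, hu, ht, hh⟩ := h
  cases u with
  | nil =>
    simp only [List.nil_append] at he
    subst he
    exact split_of_allD (by simpa using ht)
  | cons a u' =>
    rw [List.cons_append] at he
    injection he with h1 h2
    subst h1
    exact ⟨u', v, h2, fun a ha => hu a (List.mem_cons_of_mem _ ha), ht, hh⟩

theorem split_mul_head {t : List (Σ i, M i)} {i : ι} {x m : M i} (hm : m ∈ C i)
    (h : Split C D (⟨i, x⟩ :: t)) : Split C D (⟨i, m * x⟩ :: t) := by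
  obtain ⟨u, v, he, hu, ht, hh⟩ := h
  cases u with
  | nil =>
    simp only [List.nil_append] at he
    subst he
    have hh' := hh (List.cons_ne_nil _ _)
    simp only [List.head_cons] at hh'
    change x ∈ (C i : Set (M i)) * (D i : Set (M i)) at hh'
    obtain ⟨c, hc, d, hd, hcd⟩ := hh'
    refine ⟨[], ⟨i, m * x⟩ :: t, rfl, by simp, by simpa using ht, fun _ => ?_⟩
    simp only [List.head_cons]
    change m * x ∈ (C i : Set (M i)) * (D i : Set (M i))
    exact ⟨m * c, mul_mem hm hc, d, hd, by show m * c * d = m * x; rw [mul_assoc]; exact congrArg (fun y => m * y) hcd⟩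
  | cons a u' =>
    rw [List.cons_append] at he
    injection he with h1 h2
    subst h1
    have hx : x ∈ C i := hu ⟨i, x⟩ List.mem_cons_self
    refine ⟨⟨i, m * x⟩ :: u', v, by rw [List.cons_append, h2], ?_, ht, hh⟩
    rintro a ha
    rcases List.mem_cons.1 ha with rfl | ha
    · exact mul_mem hm hx
    · exact hu a (List.mem_cons_of_mem _ ha)

section DecEq

variable [DecidableEq ι] [∀ i, DecidableEq (M i)]

theorem toList_rcons {i : ι} (p : Word.Pair M i) :
    (Word.rcons p).toList
      = if p.head = 1 then p.tail.toList else ⟨i, p.head⟩ :: p.tail.toList := by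
  rw [Word.rcons]
  split <;> simp_all [Word.cons]

theorem split_smul {i : ι} {m : M i} (hm : m ∈ C i) {w : Word M}
    (h : Split C D w.toList) : Split C D (CoprodI.of m • w).toList := by
  have hw : Word.rcons (Word.equivPair i w) = w := by
    rw [← Word.equivPair_symm]
    exact (Word.equivPair i).symm_apply_apply w
  rw [Word.of_smul_def, toList_rcons]
  rw [← hw, toList_rcons] at h
  by_cases hp : (Word.equivPair i w).head = 1
  · rw [if_pos hp] at h
    simp only [hp, mul_one]
    split_ifs with hm1
    · exact h
    · exact split_cons hm h
  · rw [if_neg hp] at h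
    split_ifs with hm1
    · exact split_tail h
    · exact split_mul_head hm h

theorem allD_smul {i : ι} {m : M i} (hm : m ∈ D i) {w : Word M}
    (h : ∀ a ∈ w.toList, a.2 ∈ D a.1) :
    ∀ a ∈ (CoprodI.of m • w).toList, a.2 ∈ D a.1 := by
  have hw : Word.rcons (Word.equivPair i w) = w := by
    rw [← Word.equivPair_symm]
    exact (Word.equivPair i).symm_apply_apply w
  rw [Word.of_smul_def, toList_rcons]
  rw [← hw, toList_rcons] at h
  by_cases hp : (Word.equivPair i w).head = 1
  · rw [if_pos hp] at h
    simp only [hp, mul_one]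
    split_ifs with hm1
    · exact h
    · rintro a ha
      rcases List.mem_cons.1 ha with rfl | ha
      · exact hm
      · exact h a ha
  · rw [if_neg hp] at h
    have hph : (Word.equivPair i w).head ∈ D i := h _ List.mem_cons_self
    split_ifs with hm1
    · exact fun a ha => h a (List.mem_cons_of_mem _ ha)
    · rintro a ha
      rcases List.mem_cons.1 ha with rfl | ha
      · exact mul_mem hm hph
      · exact h a (List.mem_cons_of_mem _ ha)

theorem split_smul_of_mem {g : CoprodI M}
    (hg : g ∈ ⨆ i, (C i).map (CoprodI.of : M i →* CoprodI M)) :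
    ∀ w : Word M, Split C D w.toList → Split C D (g • w).toList := by
  rw [Subgroup.iSup_eq_closure] at hg
  induction hg using Subgroup.closure_induction_left with
  | one => intro w h; rwa [one_smul]
  | mul_left x hx y hy ih =>
    intro w h
    rw [Set.mem_iUnion] at hx
    obtain ⟨i, hx⟩ := hx
    rw [SetLike.mem_coe, Subgroup.mem_map] at hx
    obtain ⟨m, hm, rfl⟩ := hx
    rw [mul_smul]
    exact split_smul hm (ih w h)
  | inv_mul_cancel x hx y hy ih =>
    intro w h
    rw [Set.mem_iUnion] at hx
    obtain ⟨i, hx⟩ := hx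
    rw [SetLike.mem_coe, Subgroup.mem_map] at hx
    obtain ⟨m, hm, rfl⟩ := hx
    rw [mul_smul, ← map_inv]
    exact split_smul (inv_mem hm) (ih w h)

theorem allD_smul_of_mem {g : CoprodI M}
    (hg : g ∈ ⨆ i, (D i).map (CoprodI.of : M i →* CoprodI M)) :
    ∀ w : Word M, (∀ a ∈ w.toList, a.2 ∈ D a.1) →
      ∀ a ∈ (g • w).toList, a.2 ∈ D a.1 := by
  rw [Subgroup.iSup_eq_closure] at hg
  induction hg using Subgroup.closure_induction_left with
  | one => intro w h; rwa [one_smul]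
  | mul_left x hx y hy ih =>
    intro w h
    rw [Set.mem_iUnion] at hx
    obtain ⟨i, hx⟩ := hx
    rw [SetLike.mem_coe, Subgroup.mem_map] at hx
    obtain ⟨m, hm, rfl⟩ := hx
    rw [mul_smul]
    exact allD_smul hm (ih w h)
  | inv_mul_cancel x hx y hy ih =>
    intro w h
    rw [Set.mem_iUnion] at hx
    obtain ⟨i, hx⟩ := hx
    rw [SetLike.mem_coe, Subgroup.mem_map] at hx
    obtain ⟨m, hm, rfl⟩ := hx
    rw [mul_smul, ← map_inv]
    exact allD_smul (inv_mem hm) (ih w h)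

theorem split_equiv_of_mem {g : CoprodI M}
    (hg : g ∈ ((⨆ i, (C i).map (CoprodI.of : M i →* CoprodI M) : Subgroup (CoprodI M))
        : Set (CoprodI M))
      * ((⨆ i, (D i).map (CoprodI.of : M i →* CoprodI M) : Subgroup (CoprodI M))
        : Set (CoprodI M))) :
    Split C D (Word.equiv g).toList := by
  rw [Set.mem_mul] at hg
  obtain ⟨c, hc, d, hd, rfl⟩ := hg
  have h1 : Word.equiv (c * d) = c • (d • (Word.empty : Word M)) := by
    show (c * d) • (Word.empty : Word M) = _
    rw [mul_smul]
  rw [h1]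
  refine split_smul_of_mem hc _ ?_
  refine split_of_allD ?_
  exact allD_smul_of_mem hd Word.empty (by simp [Word.empty]) 

end DecEq

theorem split_comb {l : List (Σ i, M i)}
    (hmeet : ∀ i, ((C i : Set (M i)) * (D i : Set (M i)))
      ∩ ((C i : Set (M i)) * (E i : Set (M i)))
        = (C i : Set (M i)) * ((D i : Set (M i)) ∩ (E i : Set (M i))))
    (h1 : Split C D l) (h2 : Split C E l) :
    ∃ u v : List (Σ i, M i), l = u ++ v ∧ (∀ a ∈ u, a.2 ∈ C a.1) ∧
      (∀ a ∈ v.tail, a.2 ∈ (D a.1 : Set (M a.1)) ∩ (E a.1 : Set (M a.1))) ∧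
      ∀ h : v ≠ [], (v.head h).2 ∈
        (C (v.head h).1 : Set (M (v.head h).1))
          * ((D (v.head h).1 : Set (M (v.head h).1))
            ∩ (E (v.head h).1 : Set (M (v.head h).1))) := by
  obtain ⟨u1, v1, he1, hu1, ht1, hh1⟩ := h1
  obtain ⟨u2, v2, he2, hu2, ht2, hh2⟩ := h2
  rw [he2] at he1
  rcases List.append_eq_append_iff.1 he1.symm with ⟨m, rfl, rfl⟩ | ⟨m, rfl, rfl⟩
  · -- u2 = u1 ++ m, v1 = m ++ v2
    cases m with
    | nil =>
      simp only [List.append_nil, List.nil_append] at he2 hu2 ht1 hh1 ⊢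
      refine ⟨u1, v2, he2, hu2, fun a ha => ⟨ht1 a ha, ht2 a ha⟩, fun h => ?_⟩
      rw [← hmeet]
      exact ⟨hh1 h, hh2 h⟩
    | cons a m' =>
      refine ⟨u1 ++ (a :: m'), v2, he2, hu2, ?_, ?_⟩
      · intro x hx
        exact ⟨ht1 x (List.mem_append_right m' (List.mem_of_mem_tail hx)), ht2 x hx⟩
      · intro h
        have hDhead : (v2.head h).2 ∈ D (v2.head h).1 :=
          ht1 _ (List.mem_append_right m' (List.head_mem h))
        have hCD : (v2.head h).2 ∈ (C (v2.head h).1 : Set (M (v2.head h).1))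
            * (D (v2.head h).1 : Set (M (v2.head h).1)) := by
          simpa using Set.mul_mem_mul (one_mem (C (v2.head h).1)) hDhead
        rw [← hmeet]
        exact ⟨hCD, hh2 h⟩
  · -- u1 = u2 ++ m, v2 = m ++ v1
    cases m with
    | nil =>
      simp only [List.append_nil, List.nil_append] at he2 hu1 ht2 hh2 ⊢
      refine ⟨u2, v1, he2, hu1, fun a ha => ⟨ht1 a ha, ht2 a ha⟩, fun h => ?_⟩
      rw [← hmeet]
      exact ⟨hh1 h, hh2 h⟩
    | cons a m' =>
      refine ⟨u2 ++ (a :: m'), v1, by rw [he2, List.append_assoc], hu1, ?_, ?_⟩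
      · intro x hx
        exact ⟨ht1 x hx, ht2 x (List.mem_append_right m' (List.mem_of_mem_tail hx))⟩
      · intro h
        have hEhead : (v1.head h).2 ∈ E (v1.head h).1 :=
          ht2 _ (List.mem_append_right m' (List.head_mem h))
        have hCE : (v1.head h).2 ∈ (C (v1.head h).1 : Set (M (v1.head h).1))
            * (E (v1.head h).1 : Set (M (v1.head h).1)) := by
          simpa using Set.mul_mem_mul (one_mem (C (v1.head h).1)) hEhead
        rw [← hmeet]
        exact ⟨hh1 h, hCE⟩

theorem coprodI_main [DecidableEq ι] [∀ i, DecidableEq (M i)] (C D E : ∀ i, Subgroup (M i))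
    (hmeet : ∀ i, ((C i : Set (M i)) * (D i : Set (M i)))
      ∩ ((C i : Set (M i)) * (E i : Set (M i)))
        = (C i : Set (M i)) * ((D i : Set (M i)) ∩ (E i : Set (M i)))) :
    (((⨆ i, (C i).map (CoprodI.of : M i →* CoprodI M) : Subgroup (CoprodI M)) : Set (CoprodI M))
        * ((⨆ i, (D i).map (CoprodI.of : M i →* CoprodI M) : Subgroup (CoprodI M)) : Set (CoprodI M)))
      ∩ (((⨆ i, (C i).map (CoprodI.of : M i →* CoprodI M) : Subgroup (CoprodI M)) : Set (CoprodI M))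
        * ((⨆ i, (E i).map (CoprodI.of : M i →* CoprodI M) : Subgroup (CoprodI M)) : Set (CoprodI M)))
      = ((⨆ i, (C i).map (CoprodI.of : M i →* CoprodI M) : Subgroup (CoprodI M)) : Set (CoprodI M))
        * (((⨆ i, (D i).map (CoprodI.of : M i →* CoprodI M) : Subgroup (CoprodI M)) : Set (CoprodI M))
          ∩ ((⨆ i, (E i).map (CoprodI.of : M i →* CoprodI M) : Subgroup (CoprodI M)) : Set (CoprodI M))) := by
  set CG : Subgroup (CoprodI M) := ⨆ i, (C i).map (CoprodI.of : M i →* CoprodI M) with hCG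
  set DG : Subgroup (CoprodI M) := ⨆ i, (D i).map (CoprodI.of : M i →* CoprodI M) with hDG
  set EG : Subgroup (CoprodI M) := ⨆ i, (E i).map (CoprodI.of : M i →* CoprodI M) with hEG
  have hofC : ∀ (i : ι) (m : M i), m ∈ C i → CoprodI.of m ∈ CG :=
    fun i m hm => (le_iSup (fun i => (C i).map (CoprodI.of : M i →* CoprodI M)) i)
      (Subgroup.mem_map_of_mem _ hm)
  have hofD : ∀ (i : ι) (m : M i), m ∈ D i → CoprodI.of m ∈ DG :=
    fun i m hm => (le_iSup (fun i => (D i).map (CoprodI.of : M i →* CoprodI M)) i)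
      (Subgroup.mem_map_of_mem _ hm)
  have hofE : ∀ (i : ι) (m : M i), m ∈ E i → CoprodI.of m ∈ EG :=
    fun i m hm => (le_iSup (fun i => (E i).map (CoprodI.of : M i →* CoprodI M)) i)
      (Subgroup.mem_map_of_mem _ hm)
  apply Set.Subset.antisymm
  · rintro g ⟨hg1, hg2⟩
    have s1 : Split C D (Word.equiv g).toList := split_equiv_of_mem hg1
    have s2 : Split C E (Word.equiv g).toList := split_equiv_of_mem hg2
    obtain ⟨u, v, he, hu, ht, hh⟩ := split_comb hmeet s1 s2
    have hgeq : g = ((Word.equiv g).toList.map fun l => (CoprodI.of l.2 : CoprodI M)).prod := by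
      conv_lhs => rw [← (Word.equiv (M := M)).symm_apply_apply g]
      rfl
    have hu' : (u.map fun l => (CoprodI.of l.2 : CoprodI M)).prod ∈ CG := by
      refine Subgroup.list_prod_mem _ ?_
      intro x hx
      rw [List.mem_map] at hx
      obtain ⟨a, ha, rfl⟩ := hx
      exact hofC _ _ (hu a ha)
    rw [he, List.map_append, List.prod_append] at hgeq
    cases v with
    | nil =>
      rw [Set.mem_mul]
      refine ⟨g, ?_, 1, ⟨SetLike.mem_coe.2 (one_mem _), SetLike.mem_coe.2 (one_mem _)⟩,
        mul_one g⟩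
      rw [hgeq]
      simp only [List.map_nil, List.prod_nil, mul_one]
      exact SetLike.mem_coe.2 hu'
    | cons b t =>
      have hh' := hh (List.cons_ne_nil _ _)
      simp only [List.head_cons] at hh'
      change b.2 ∈ (C b.1 : Set (M b.1)) * ((D b.1 : Set (M b.1)) ∩ (E b.1 : Set (M b.1))) at hh'
      obtain ⟨c, hc, f, hf, hcf⟩ := Set.mem_mul.1 hh'
      have htD : (t.map fun l => (CoprodI.of l.2 : CoprodI M)).prod ∈ DG := by
        refine Subgroup.list_prod_mem _ ?_
        intro x hx
        rw [List.mem_map] at hx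
        obtain ⟨a, ha, rfl⟩ := hx
        exact hofD _ _ (ht a ha).1
      have htE : (t.map fun l => (CoprodI.of l.2 : CoprodI M)).prod ∈ EG := by
        refine Subgroup.list_prod_mem _ ?_
        intro x hx
        rw [List.mem_map] at hx
        obtain ⟨a, ha, rfl⟩ := hx
        exact hofE _ _ (ht a ha).2
      rw [Set.mem_mul]
      refine ⟨(u.map fun l => (CoprodI.of l.2 : CoprodI M)).prod * CoprodI.of c,
        SetLike.mem_coe.2 (mul_mem hu' (hofC _ _ hc)),
        CoprodI.of f * (t.map fun l => (CoprodI.of l.2 : CoprodI M)).prod,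
        ⟨SetLike.mem_coe.2 (mul_mem (hofD _ _ hf.1) htD),
         SetLike.mem_coe.2 (mul_mem (hofE _ _ hf.2) htE)⟩, ?_⟩
      rw [hgeq]
      simp only [List.map_cons, List.prod_cons]
      rw [← hcf, map_mul]
      group
  · rintro x hx
    rw [Set.mem_mul] at hx
    obtain ⟨c, hc, f, hf, rfl⟩ := hx
    exact ⟨Set.mul_mem_mul hc hf.1, Set.mul_mem_mul hc hf.2⟩

/-! ### Transporting the statement along injective homomorphisms -/

theorem transport {G H : Type*} [Group G] [Group H] (e : G →* H) (he : Function.Injective e)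
    (C D E : Subgroup G)
    (h : ((C : Set G) * (D : Set G)) ∩ ((C : Set G) * (E : Set G))
      = (C : Set G) * ((D : Set G) ∩ (E : Set G))) :
    (((C.map e : Subgroup H) : Set H) * ((D.map e : Subgroup H) : Set H))
      ∩ (((C.map e : Subgroup H) : Set H) * ((E.map e : Subgroup H) : Set H))
      = ((C.map e : Subgroup H) : Set H)
        * (((D.map e : Subgroup H) : Set H) ∩ ((E.map e : Subgroup H) : Set H)) := by
  simp only [Subgroup.coe_map]
  rw [← Set.image_mul, ← Set.image_mul, ← Set.image_inter he, ← Set.image_inter he,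
    ← Set.image_mul, h]

/-! ### Transporting from `Monoid.Coprod` to `Monoid.CoprodI` over `Bool` -/

universe u v

abbrev Fam (A : Type u) (B : Type v) : Bool → Type (max u v) :=
  fun b => cond b (ULift.{u} B) (ULift.{v} A)

instance famGroup (A : Type u) (B : Type v) [Group A] [Group B] : ∀ b, Group (Fam A B b) :=
  fun b => Bool.rec (motive := fun b => Group (Fam A B b))
    (inferInstanceAs (Group (ULift.{v} A))) (inferInstanceAs (Group (ULift.{u} B))) b

variable (A : Type u) (B : Type v) [Group A] [Group B]

def uA : A ≃* ULift.{v} A := MulEquiv.ulift.symm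

def uB : B ≃* ULift.{u} B := MulEquiv.ulift.symm

def toCoprod : CoprodI (Fam A B) →* A ∗ B :=
  CoprodI.lift (fun b => Bool.rec (motive := fun b => Fam A B b →* A ∗ B)
    (Coprod.inl.comp (MulEquiv.ulift : ULift.{v} A ≃* A).toMonoidHom)
    (Coprod.inr.comp (MulEquiv.ulift : ULift.{u} B ≃* B).toMonoidHom) b)

def fromCoprod : A ∗ B →* CoprodI (Fam A B) :=
  Coprod.lift
    ((CoprodI.of (M := Fam A B) (i := false)).comp (uA A).toMonoidHom)
    ((CoprodI.of (M := Fam A B) (i := true)).comp (uB B).toMonoidHom)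

def coprodMulEquiv : (A ∗ B) ≃* CoprodI (Fam A B) :=
  MonoidHom.toMulEquiv (fromCoprod A B) (toCoprod A B)
    (by
      apply Coprod.hom_ext <;> ext x <;>
        simp only [fromCoprod, toCoprod, MonoidHom.coe_comp, Function.comp_apply,
          Monoid.Coprod.lift_apply_inl, Monoid.Coprod.lift_apply_inr,
          CoprodI.lift_of, MonoidHom.id_apply, MonoidHom.id_comp] <;>
        simp [uA, uB])
    (by
      apply CoprodI.ext_hom
      intro b
      cases b <;> ext x <;>
        simp only [fromCoprod, toCoprod, MonoidHom.coe_comp, Function.comp_apply,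
          CoprodI.lift_of, MonoidHom.id_apply, MonoidHom.id_comp] <;>
        simp [uA, uB, Monoid.Coprod.lift_apply_inl, Monoid.Coprod.lift_apply_inr])

theorem coprodMulEquiv_comp_inl :
    (coprodMulEquiv A B).toMonoidHom.comp Coprod.inl
      = (CoprodI.of (M := Fam A B) (i := false)).comp (uA A).toMonoidHom := by
  ext x
  simp [coprodMulEquiv, fromCoprod, MonoidHom.toMulEquiv]

theorem coprodMulEquiv_comp_inr :
    (coprodMulEquiv A B).toMonoidHom.comp Coprod.inr
      = (CoprodI.of (M := Fam A B) (i := true)).comp (uB B).toMonoidHom := by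
  ext x
  simp [coprodMulEquiv, fromCoprod, MonoidHom.toMulEquiv]

end StmtAux

/-- In a free product `G = A ∗ B`, for special subgroups `C, D, E`, if
`C_A D_A ∩ C_A E_A = C_A (D_A ∩ E_A)` in `A` and `C_B D_B ∩ C_B E_B = C_B (D_B ∩ E_B)` in `B`,
then `CD ∩ CE = C (D ∩ E)` in `G`. -/
theorem stmt_3 {A B : Type*} [Group A] [Group B]
    (CA DA EA : Subgroup A) (CB DB EB : Subgroup B)
    (C D E : Subgroup (A ∗ B))
    (hC : C = CA.map (Monoid.Coprod.inl : A →* A ∗ B)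
        ⊔ CB.map (Monoid.Coprod.inr : B →* A ∗ B))
    (hD : D = DA.map Monoid.Coprod.inl ⊔ DB.map Monoid.Coprod.inr)
    (hE : E = EA.map Monoid.Coprod.inl ⊔ EB.map Monoid.Coprod.inr)
    (hA : ((CA : Set A) * (DA : Set A)) ∩ ((CA : Set A) * (EA : Set A))
        = (CA : Set A) * ((DA ⊓ EA : Subgroup A) : Set A))
    (hB : ((CB : Set B) * (DB : Set B)) ∩ ((CB : Set B) * (EB : Set B))
        = (CB : Set B) * ((DB ⊓ EB : Subgroup B) : Set B)) :
    ((C : Set (A ∗ B)) * (D : Set (A ∗ B))) ∩ ((C : Set (A ∗ B)) * (E : Set (A ∗ B)))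
      = (C : Set (A ∗ B)) * ((D ⊓ E : Subgroup (A ∗ B)) : Set (A ∗ B)) := by
  classical
  open StmtAux Monoid Monoid.CoprodI in
  subst hC hD hE
  rw [Subgroup.coe_inf] at hA hB ⊢
  haveI : ∀ b, DecidableEq (Fam A B b) := fun b => Classical.decEq _
  set e := coprodMulEquiv A B with he
  set Cf : ∀ b, Subgroup (Fam A B b) :=
    fun b => Bool.rec (motive := fun b => Subgroup (Fam A B b))
      (CA.map (uA A).toMonoidHom) (CB.map (uB B).toMonoidHom) b with hCf
  set Df : ∀ b, Subgroup (Fam A B b) :=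
    fun b => Bool.rec (motive := fun b => Subgroup (Fam A B b))
      (DA.map (uA A).toMonoidHom) (DB.map (uB B).toMonoidHom) b with hDf
  set Ef : ∀ b, Subgroup (Fam A B b) :=
    fun b => Bool.rec (motive := fun b => Subgroup (Fam A B b))
      (EA.map (uA A).toMonoidHom) (EB.map (uB B).toMonoidHom) b with hEf
  have hmeet : ∀ b, ((Cf b : Set (Fam A B b)) * (Df b : Set (Fam A B b)))
      ∩ ((Cf b : Set (Fam A B b)) * (Ef b : Set (Fam A B b)))
        = (Cf b : Set (Fam A B b)) * ((Df b : Set (Fam A B b)) ∩ (Ef b : Set (Fam A B b))) := by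
    intro b
    cases b
    · exact transport (uA A).toMonoidHom (uA A).injective CA DA EA hA
    · exact transport (uB B).toMonoidHom (uB B).injective CB DB EB hB
  have key := @coprodI_main Bool (Fam A B) _ instDecidableEqBool (fun b => Classical.decEq _) Cf Df Ef hmeet
  have hmap : ∀ (XA : Subgroup A) (XB : Subgroup B)
      (Xf : ∀ b, Subgroup (Fam A B b)),
      Xf false = XA.map (uA A).toMonoidHom → Xf true = XB.map (uB B).toMonoidHom →
      Subgroup.map e.toMonoidHom (XA.map Monoid.Coprod.inl ⊔ XB.map Monoid.Coprod.inr)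
        = ⨆ b, (Xf b).map (CoprodI.of : Fam A B b →* CoprodI (Fam A B)) := by
    rintro XA XB Xf h1 h2
    rw [Subgroup.map_sup, Subgroup.map_map, Subgroup.map_map,
      coprodMulEquiv_comp_inl, coprodMulEquiv_comp_inr,
      ← Subgroup.map_map, ← Subgroup.map_map, ← h1, ← h2,
      iSup_bool_eq, sup_comm]
  refine Set.image_injective.mpr e.injective ?_
  rw [Set.image_inter e.injective, Set.image_mul, Set.image_mul, Set.image_mul,
    Set.image_inter e.injective]
  have hcoe : ∀ (H : Subgroup (A ∗ B)), ⇑e '' (H : Set (A ∗ B))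
      = ((Subgroup.map e.toMonoidHom H : Subgroup (CoprodI (Fam A B)))
          : Set (CoprodI (Fam A B))) := by
    intro H
    rw [Subgroup.coe_map]
    rfl
  rw [hcoe, hcoe, hcoe, hmap CA CB Cf rfl rfl, hmap DA DB Df rfl rfl, hmap EA EB Ef rfl rfl]
  exact key
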